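/- arXiv:2605.27142 — 2 statements merged into one kernel-verified Lean document; each statement's English description precedes it below -/
import Mathlib

section
/- The number of ways to iteratively remove all bracket pairs from a nonempty Dyck word — where at each step one removes the current rightmost opening bracket together with some closing bracket to its right, subject to the condition that after each removal the resulting string is still a Dyck word — equals the product of the opening depths of the original word. -/
/-- Weight of a bracket symbol: open (`true`) counts +1, close (`false`) counts -1. -/
def wt (b : Bool) : ℤ := if b then 1 else -1

/-- Depth after reading the first `k` symbols of `w`. -/
def depth (w : List Bool) (k : ℕ) : ℤ := ((w.take k).map wt).sum

/-- A Dyck word: every prefix sum is nonnegative and the total sum is zero. -/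
def IsDyck (w : List Bool) : Prop :=
  (∀ k, 0 ≤ depth w k) ∧ depth w w.length = 0


/-- Position i holds the last (rightmost) opening bracket of w. -/
def isLastOpen (w : List Bool) (i : ℕ) : Prop :=
  ∃ h : i < w.length, w[i]'h = true ∧
    ∀ j, (hj : j < w.length) → i < j → w[j]'hj = false

/-- A full expulsion route: repeatedly remove the rightmost opening bracket together
with a chosen closing bracket to its right, so that each intermediate word is a
Dyck word, until the empty word is reached. -/
inductive Route : List Bool → Type where
  | nil : Route []
  | cons {w : List Bool} (i j : ℕ) (hij : i < j) (hj : j < w.length)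
      (hlast : isLastOpen w i) (hc : w[j]'hj = false)
      (hD : IsDyck ((w.eraseIdx j).eraseIdx i))
      (r : Route ((w.eraseIdx j).eraseIdx i)) : Route w

/-- The opening depths of a word: the depths attained immediately after each
opening bracket, read left to right. -/
def openingDepths (w : List Bool) : List ℤ :=
  (List.range w.length).filterMap
    (fun k => if w.getD k false = true then some (depth w (k + 1)) else none)

/-! ### Auxiliary depth lemmas -/

lemma depth_append_le (u v : List Bool) (k : ℕ) (hk : k ≤ u.length) :
    depth (u ++ v) k = depth u k := by
  unfold depth; rw [List.take_append_of_le_length hk]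

lemma depth_append_add (u v : List Bool) (t : ℕ) :
    depth (u ++ v) (u.length + t) = depth u u.length + depth v t := by
  simp [depth, List.take_append]
  rw [List.take_of_length_le (by simp)]

lemma depth_cons (b : Bool) (v : List Bool) (t : ℕ) :
    depth (b :: v) (t+1) = wt b + depth v t := by simp [depth]

lemma depth_replicate (m t : ℕ) :
    depth (List.replicate m false) t = -(min t m : ℤ) := by
  simp [depth, wt, List.take_replicate]

lemma depth_take (w : List Bool) (i k : ℕ) (hk : k ≤ i) :
    depth (w.take i) k = depth w k := by
  simp [depth, List.take_take, Nat.min_eq_left hk]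

/-! ### Last open bracket -/

lemma isLastOpen_unique {w : List Bool} {i i' : ℕ}
    (h : isLastOpen w i) (h' : isLastOpen w i') : i = i' := by
  obtain ⟨hi, ho, hl⟩ := h; obtain ⟨hi', ho', hl'⟩ := h'
  by_contra hne
  rcases Nat.lt_or_ge i i' with hlt | hge
  · have := hl i' hi' hlt; rw [ho'] at this; exact Bool.noConfusion this
  · have := hl' i hi (lt_of_le_of_ne hge (Ne.symm hne)); rw [ho] at this
    exact Bool.noConfusion this

lemma exists_lastOpen {w : List Bool} (hne : w ≠ []) (hD : IsDyck w) :
    ∃ i, isLastOpen w i := by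
  classical
  have htrue : ∃ i0, i0 < w.length ∧ w.getD i0 false = true := by
    by_contra hall
    push_neg at hall
    have hrep : w = List.replicate w.length false := by
      apply List.ext_getElem (by simp)
      intro k h1 h2
      have := hall k (by simpa using h1)
      simp only [List.getD_eq_getElem?_getD, List.getElem?_eq_getElem h1] at this
      simpa using this
    have h2 := hD.2
    rw [hrep] at h2
    simp [depth, wt] at h2
    exact hne (by rw [hrep, h2]; rfl)
  obtain ⟨i0, hi0, ht0⟩ := htrue
  set P : ℕ → Prop := fun i => w.getD i false = true with hP
  let i := Nat.findGreatest P w.length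
  have hPi : P i := Nat.findGreatest_spec (le_of_lt hi0) ht0
  have hilt : i < w.length := by
    by_contra h
    push_neg at h
    rw [hP] at hPi
    simp only [List.getD_eq_getElem?_getD,
      List.getElem?_eq_none (show w.length ≤ i from h)] at hPi
    simp at hPi
  refine ⟨i, hilt, ?_, ?_⟩
  · have := hPi
    simpa [hP, List.getD_eq_getElem?_getD, List.getElem?_eq_getElem hilt] using this
  · intro j hj hij
    have : ¬ P j := Nat.findGreatest_is_greatest hij (le_of_lt hj)
    simp only [hP, List.getD_eq_getElem?_getD, List.getElem?_eq_getElem hj] at this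
    simpa using this

lemma lastOpen_decomp {w : List Bool} {i : ℕ} (h : isLastOpen w i) :
    w = w.take i ++ true :: List.replicate (w.length - i - 1) false := by
  obtain ⟨hi, ho, hl⟩ := h
  have hdrop : w.drop i = true :: List.replicate (w.length - i - 1) false := by
    apply List.ext_getElem (by simp; omega)
    intro k h1 h2
    rw [List.getElem_drop]
    match k with
    | 0 => simpa using ho
    | k+1 =>
      have hlen : i + (k+1) < w.length := by simp at h1; omega
      have := hl _ hlen (by omega)
      simpa using this
  conv_lhs => rw [← List.take_append_drop i w]
  rw [hdrop]

/-! ### Erasing -/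

lemma eraseIdx_replicate {α : Type*} (a : α) (m k : ℕ) (h : k < m) :
    (List.replicate m a).eraseIdx k = List.replicate (m-1) a := by
  apply List.eq_replicate_iff.2
  constructor
  · rw [List.length_eraseIdx]; simp [h]
  · intro b hb
    exact List.eq_of_mem_replicate (List.Sublist.subset (List.eraseIdx_sublist _ k) hb)

lemma erase_erase {u : List Bool} {m' : ℕ} (i j : ℕ) (hu : u.length = i)
    (hij : i < j) (hj : j < i + m' + 2) :
    (((u ++ true :: List.replicate (m'+1) false).eraseIdx j).eraseIdx i)
      = u ++ List.replicate m' false := by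
  have h1 : (u ++ true :: List.replicate (m'+1) false)
      = (u ++ [true]) ++ List.replicate (m'+1) false := by simp
  rw [h1, List.eraseIdx_append_of_length_le (by simp [hu]; omega),
    eraseIdx_replicate _ _ _ (by simp [hu]; omega)]
  simp only [Nat.add_sub_cancel]
  rw [List.append_assoc, List.eraseIdx_append_of_length_le (by omega), hu]
  simp

/-! ### Dyck facts for the decomposition -/

lemma total_eq {u : List Bool} (m : ℕ) :
    depth (u ++ true :: List.replicate m false) (u ++ true :: List.replicate m false).length
      = depth u u.length + 1 - m := by
  have hlen : (u ++ true :: List.replicate m false).length = u.length + (m + 1) := by simp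
  rw [hlen, depth_append_add]
  have : depth (true :: List.replicate m false) (m + 1) = 1 - m := by
    rw [depth_cons, depth_replicate]
    simp [wt, min_self]; ring
  rw [this]; ring

lemma isDyck_reduced {u : List Bool} {m' : ℕ}
    (hpre : ∀ k, k ≤ u.length → 0 ≤ depth u k)
    (hsum : depth u u.length = m') :
    IsDyck (u ++ List.replicate m' false) := by
  have hlen : (u ++ List.replicate m' false).length = u.length + m' := by simp
  constructor
  · intro k
    rcases le_or_gt k u.length with hk | hk
    · rw [depth_append_le _ _ _ hk]; exact hpre k hk
    · rcases le_or_gt k (u.length + m') with hk2 | hk2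
      · have : k = u.length + (k - u.length) := by omega
        rw [this, depth_append_add, depth_replicate, hsum]
        have h3 : ((k - u.length : ℕ) : ℤ) ≤ (m' : ℤ) := by omega
        rw [min_eq_left h3]
        omega
      · have hof : depth (u ++ List.replicate m' false) k
            = depth (u ++ List.replicate m' false) (u.length + m') := by
          unfold depth
          rw [List.take_of_length_le (by rw [hlen]; omega),
              List.take_of_length_le hlen.le]
        rw [hof, depth_append_add, depth_replicate, hsum, min_self]
        simp
  · rw [hlen, depth_append_add, depth_replicate, hsum, min_self]; simp

/-! ### Opening depths lemmas -/

lemma openingDepths_append_false (u : List Bool) :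
    openingDepths (u ++ [false]) = openingDepths u := by
  unfold openingDepths
  rw [List.length_append, List.length_singleton, List.range_succ, List.filterMap_append]
  have h2 : List.filterMap
      (fun k => if (u ++ [false]).getD k false = true then some (depth (u ++ [false]) (k + 1)) else none)
      [u.length] = [] := by
    simp [List.getD_eq_getElem?_getD, List.getElem?_append_right (le_refl u.length)]
  rw [h2, List.append_nil]
  apply List.filterMap_congr
  intro k hk
  rw [List.mem_range] at hk
  have hg : (u ++ [false]).getD k false = u.getD k false := by
    simp [List.getD_eq_getElem?_getD, List.getElem?_append_left hk]
  rw [hg, depth_append_le _ _ _ (by omega)]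

lemma openingDepths_append_true (u : List Bool) :
    openingDepths (u ++ [true]) = openingDepths u ++ [depth u u.length + 1] := by
  unfold openingDepths
  rw [List.length_append, List.length_singleton, List.range_succ, List.filterMap_append]
  have h2 : List.filterMap
      (fun k => if (u ++ [true]).getD k false = true then some (depth (u ++ [true]) (k + 1)) else none)
      [u.length] = [depth u u.length + 1] := by
    have hg : (u ++ [true]).getD u.length false = true := by
      simp [List.getD_eq_getElem?_getD, List.getElem?_append_right (le_refl u.length)]
    have hd : depth (u ++ [true]) (u.length + 1) = depth u u.length + 1 := by
      rw [depth_append_add]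
      simp [depth, wt]
    simp [hg, hd]
  rw [h2]
  congr 1
  apply List.filterMap_congr
  intro k hk
  rw [List.mem_range] at hk
  have hg : (u ++ [true]).getD k false = u.getD k false := by
    simp [List.getD_eq_getElem?_getD, List.getElem?_append_left hk]
  rw [hg, depth_append_le _ _ _ (by omega)]

lemma openingDepths_append_replicate (u : List Bool) (k : ℕ) :
    openingDepths (u ++ List.replicate k false) = openingDepths u := by
  induction k with
  | zero => simp
  | succ k ih =>
    rw [List.replicate_succ', ← List.append_assoc, openingDepths_append_false, ih]

/-! ### Counting routes -/

instance : Unique (Route []) where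
  default := Route.nil
  uniq := fun r => by
    cases r with
    | nil => rfl
    | cons i j hij hj _ _ _ _ => exact absurd hj (by simp)

lemma card_route_nil : Nat.card (Route []) = 1 := Nat.card_unique

lemma card_subtype_Ioo (i n : ℕ) :
    Nat.card {j : ℕ // i < j ∧ j < n} = n - i - 1 := by
  rw [Nat.card_congr (Equiv.subtypeEquivRight
    (q := (· ∈ Finset.Ioo i n)) (fun j => by simp))]
  rw [Nat.card_eq_finsetCard, Nat.card_Ioo]

lemma card_route_cons {w w' : List Bool} {i : ℕ} (hlast : isLastOpen w i)
    (he : ∀ j, i < j → j < w.length → (w.eraseIdx j).eraseIdx i = w')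
    (hD' : IsDyck w') :
    Nat.card (Route w) = (w.length - i - 1) * Nat.card (Route w') := by
  have hc : ∀ j (hj : j < w.length), i < j → w[j]'hj = false := by
    obtain ⟨_, _, hl⟩ := hlast
    exact fun j hj hij => hl j hj hij
  set g : {j : ℕ // i < j ∧ j < w.length} × Route w' → Route w := fun p =>
    Route.cons i p.1.1 p.1.2.1 p.1.2.2 hlast (hc _ p.1.2.2 p.1.2.1)
      (by rw [he _ p.1.2.1 p.1.2.2]; exact hD')
      (cast (congrArg Route (he _ p.1.2.1 p.1.2.2).symm) p.2) with hg
  have hbij : Function.Bijective g := by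
    constructor
    · rintro ⟨⟨j₁, hj₁, hj₁'⟩, r₁⟩ ⟨⟨j₂, hj₂, hj₂'⟩, r₂⟩ h
      simp only [hg] at h
      injection h with h1 h2 h3 h4
      · subst h3
        refine Prod.ext (Subtype.ext rfl) ?_
        have h9 := eq_of_heq h4
        have := congrArg (cast (congrArg Route (he _ hj₁ hj₁'))) h9
        simpa using this
    · intro r
      cases r with
      | nil => exact absurd hlast.1 (by simp)
      | cons i' j hij hj hlast' hc' hD r' =>
        have ei : i' = i := isLastOpen_unique hlast' hlast
        subst ei
        have e := he j hij hj
        refine ⟨⟨⟨j, hij, hj⟩, cast (congrArg Route e) r'⟩, ?_⟩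
        simp only [hg]
        have : cast (congrArg Route (he j hij hj).symm)
            (cast (congrArg Route (he j hij hj)) r') = r' := by
          simp [cast_cast]
        rw [this]
  rw [← Nat.card_eq_of_bijective g hbij, Nat.card_prod, card_subtype_Ioo]

/-! ### Main induction -/

lemma key : ∀ n (w : List Bool), w.length ≤ n → IsDyck w →
    (Nat.card (Route w) : ℤ) = (openingDepths w).prod := by
  intro n
  induction n with
  | zero =>
    intro w hw _
    have : w = [] := List.eq_nil_of_length_eq_zero (Nat.le_zero.1 hw)
    subst this
    simp [card_route_nil, openingDepths]
  | succ n ih =>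
    intro w hw hD
    by_cases hne : w = []
    · subst hne
      simp [card_route_nil, openingDepths]
    · obtain ⟨i, hlast⟩ := exists_lastOpen hne hD
      obtain ⟨hi, ho, hl⟩ := id hlast
      set u := w.take i with hu
      have hulen : u.length = i := by rw [hu, List.length_take]; omega
      set m := w.length - i - 1 with hm
      have hdecomp : w = u ++ true :: List.replicate m false := lastOpen_decomp hlast
      have hwlen : w.length = i + m + 1 := by omega
      have hs : depth u u.length = (m : ℤ) - 1 := by
        have h0 := hD.2
        rw [hdecomp, total_eq] at h0
        linarith
      have hs0 : 0 ≤ depth u u.length := by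
        have : depth u u.length = depth w i := by
          rw [hulen, hu]; exact depth_take w i i le_rfl
        rw [this]; exact hD.1 i
      have hm1 : 1 ≤ m := by
        have h := hs0
        rw [hs] at h
        omega
      obtain ⟨m', hm'⟩ : ∃ m', m = m' + 1 := ⟨m - 1, by omega⟩
      have hsum : depth u u.length = (m' : ℤ) := by rw [hs, hm']; push_cast; ring
      have hpre : ∀ k, k ≤ u.length → 0 ≤ depth u k := by
        intro k hk
        have : depth u k = depth w k := by
          rw [hu]; exact depth_take w i k (by omega)
        rw [this]; exact hD.1 k
      have hD' : IsDyck (u ++ List.replicate m' false) := isDyck_reduced hpre hsum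
      have he : ∀ j, i < j → j < w.length →
          (w.eraseIdx j).eraseIdx i = u ++ List.replicate m' false := by
        intro j h1 h2
        conv_lhs => rw [hdecomp, hm']
        exact erase_erase i j hulen h1 (by omega)
      have hcard := card_route_cons hlast he hD'
      have hlen' : (u ++ List.replicate m' false).length ≤ n := by
        simp only [List.length_append, List.length_replicate]
        omega
      have hih := ih (u ++ List.replicate m' false) hlen' hD'
      have hod : openingDepths w
          = openingDepths (u ++ List.replicate m' false) ++ [(m : ℤ)] := by
        conv_lhs => rw [hdecomp]
        have h1 : u ++ true :: List.replicate m false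
            = (u ++ [true]) ++ List.replicate m false := by simp
        rw [h1, openingDepths_append_replicate, openingDepths_append_true,
          openingDepths_append_replicate]
        congr 2
        linarith
      rw [hcard, hod, List.prod_append]
      push_cast
      rw [hih]
      have : ((w.length - i - 1 : ℕ) : ℤ) = (m : ℤ) := by rw [hm]
      rw [this]
      simp [mul_comm]

/-- The number of full expulsion routes of a nonempty Dyck word equals the
product of its opening depths. -/
theorem card_routes_eq_prod_openingDepths (S : List Bool) (hne : S ≠ [])
    (hS : IsDyck S) :
    (Nat.card (Route S) : ℤ) = (openingDepths S).prod := by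
  exact key S.length S le_rfl hS
end

section
/- If a word over {open, close} is a Dyck word, and we delete one opening bracket and one closing bracket from it such that the result is NOT a Dyck word, then there is a position strictly between the two deleted symbols' positions at which the original word's depth equals the depth contributed only by symbols left of the first deletion — equivalently, the depth between the two deleted positions attains 0 in the modified counting; contrapositively, if the depth of the original word is at least 1 at every position between the deleted opening and closing bracket, the result is a Dyck word. -/
lemma depth_succ (w : List Bool) (k : ℕ) (hk : k < w.length) :
    depth w (k + 1) = depth w k + wt (w[k]) := by
  unfold depth
  rw [List.take_succ, List.getElem?_eq_getElem hk, List.map_append, List.sum_append]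
  simp

lemma depth_eraseIdx (w : List Bool) (i : ℕ) (hi : i < w.length) (k : ℕ) :
    depth (w.eraseIdx i) k =
      if k ≤ i then depth w k else depth w (k + 1) - wt (w[i]) := by
  rw [List.eraseIdx_eq_take_drop_succ]
  split
  · next h =>
    unfold depth
    rw [List.take_append]
    have hlen : (w.take i).length = i := List.length_take_of_le (le_of_lt hi)
    rw [List.take_take, min_eq_left h, hlen, Nat.sub_eq_zero_of_le h]
    simp
  · next h =>
    push_neg at h
    unfold depth
    rw [List.take_append]
    have hlen : (w.take i).length = i := List.length_take_of_le (le_of_lt hi)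
    rw [hlen, List.take_take, min_eq_right (le_of_lt h)]
    have hk1 : k + 1 = i + (k + 1 - i) := by omega
    rw [hk1, List.take_add]
    have hdrop : w.drop i = w[i] :: w.drop (i + 1) := List.drop_eq_getElem_cons hi
    have h2 : k + 1 - i = (k - i) + 1 := by omega
    rw [hdrop, h2, List.take_succ_cons]
    simp [add_comm, add_assoc, add_left_comm]
    ring

lemma sum_eraseIdx (w : List Bool) (i : ℕ) (hi : i < w.length) :
    ((w.eraseIdx i).map wt).sum = (w.map wt).sum - wt (w[i]) := by
  have hw : (w.map wt).sum
      = ((w.take i).map wt).sum + (wt (w[i]) + ((w.drop (i+1)).map wt).sum) := by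
    conv_lhs => rw [← List.take_append_drop i w, List.drop_eq_getElem_cons hi]
    rw [List.map_append, List.sum_append, List.map_cons, List.sum_cons]
  rw [List.eraseIdx_eq_take_drop_succ, List.map_append, List.sum_append, hw]
  ring

/-- If deleting an opening bracket at position n1 and a closing bracket at
position n2 > n1 from a Dyck word does not yield a Dyck word, then the depth of
the original word vanishes at some position strictly between n1 and n2. -/
theorem exists_zero_depth_of_not_dyck_after_expulsion (S : List Bool)
    (hS : IsDyck S) (n1 n2 : ℕ) (h12 : n1 < n2) (h2 : n2 < S.length)
    (h1 : n1 < S.length) (ho : S[n1]'h1 = true) (hc : S[n2]'h2 = false)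
    (hnot : ¬ IsDyck ((S.eraseIdx n2).eraseIdx n1)) :
    ∃ k, n1 < k ∧ k < n2 ∧ depth S k = 0 := by
  set S1 := S.eraseIdx n2 with hS1
  set T := S1.eraseIdx n1 with hT
  have hlen1 : S1.length = S.length - 1 := List.length_eraseIdx_of_lt h2
  have hn1' : n1 < S1.length := by omega
  have hgn1 : S1[n1]'hn1' = S[n1]'h1 :=
    List.getElem_eraseIdx_of_lt (l := S) (i := n2) (j := n1) hn1' h12
  -- total sum of T is zero
  have htot : depth T T.length = 0 := by
    have : depth T T.length = (T.map wt).sum := by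
      simp [depth]
    have hSsum : (S.map wt).sum = 0 := by
      have := hS.2
      simpa [depth] using this
    have e1 : wt (S1[n1]'hn1') = 1 := by rw [hgn1, ho]; rfl
    have e2 : wt (S[n2]'h2) = -1 := by rw [hc]; rfl
    rw [this, hT, sum_eraseIdx S1 n1 hn1', e1, hS1, sum_eraseIdx S n2 h2, e2, hSsum]
    ring
  -- if not Dyck, some prefix sum is negative
  have hex : ∃ k, depth T k < 0 := by
    by_contra hco
    push_neg at hco
    exact hnot ⟨hco, htot⟩
  obtain ⟨k, hk⟩ := hex
  have hdT : depth T k = if k ≤ n1 then depth S1 k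
      else depth S1 (k + 1) - wt (S1[n1]'hn1') := depth_eraseIdx S1 n1 hn1' k
  have hdS1 : ∀ m, depth S1 m = if m ≤ n2 then depth S m
      else depth S (m + 1) - wt (S[n2]'h2) := fun m => depth_eraseIdx S n2 h2 m
  by_cases hkn1 : k ≤ n1
  · rw [hdT, if_pos hkn1, hdS1, if_pos (by omega)] at hk
    exact absurd (hS.1 k) (by omega)
  · push_neg at hkn1
    rw [hdT, if_neg (by omega), hgn1, ho] at hk
    by_cases hkn2 : k + 1 ≤ n2
    · rw [hdS1, if_pos hkn2] at hk
      have hd0 : depth S (k + 1) = 0 := le_antisymm (by simp [wt] at hk; omega) (hS.1 (k + 1))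
      have hne : k + 1 ≠ n2 := by
        intro he
        have hstep : depth S (n2 + 1) = depth S n2 + wt (S[n2]'h2) := depth_succ S n2 h2
        rw [hc] at hstep
        have := hS.1 (n2 + 1)
        rw [hstep, ← he, hd0] at this
        simp [wt] at this
      exact ⟨k + 1, by omega, by omega, hd0⟩
    · rw [hdS1, if_neg (by omega), hc] at hk
      have := hS.1 (k + 1 + 1)
      simp [wt] at hk
      omega
end
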